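/- For every integer q ≥ 2, every integer k ≥ 3, and every word w of length k over an alphabet of q letters, one has P_w(q) = 1 and P_w(q − q^{-(k-2)}) ≤ 0; consequently P_w has a real root in the interval [q − q^{-(k-2)}, q). -/

import Mathlib

/-- The `i`-th autocorrelation bit `b_i` of a word `w` (for `1 ≤ i ≤ w.length`):
`1` if the prefix of `w` of length `i` equals the suffix of `w` of length `i`, else `0`. -/
def acorrBit {α : Type*} [DecidableEq α] (w : List α) (i : ℕ) : ℕ :=
  if w.take i = w.drop (w.length - i) then 1 else 0

/-- The inverse autocorrelation polynomial `A_w(x) = ∑_{i=1}^k b_i x^(i-1)`, over `ℝ`. -/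
noncomputable def APolyR {α : Type*} [DecidableEq α] (w : List α) : Polynomial ℝ :=
  ∑ i ∈ Finset.range w.length, Polynomial.C (acorrBit w (i + 1) : ℝ) * Polynomial.X ^ i

/-- The inverse autocorrelation polynomial `A_w(x)`, over `ℂ`. -/
noncomputable def APolyC {α : Type*} [DecidableEq α] (w : List α) : Polynomial ℂ :=
  ∑ i ∈ Finset.range w.length, Polynomial.C (acorrBit w (i + 1) : ℂ) * Polynomial.X ^ i

/-- The recurrence polynomial `P_w(x) = 1 + (x - q)·A_w(x)`, over `ℝ`. -/
noncomputable def PPolyR (q : ℕ) {α : Type*} [DecidableEq α] (w : List α) : Polynomial ℝ :=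
  1 + (Polynomial.X - Polynomial.C (q : ℝ)) * APolyR w

/-- The recurrence polynomial `P_w(x) = 1 + (x - q)·A_w(x)`, over `ℂ`. -/
noncomputable def PPolyC (q : ℕ) {α : Type*} [DecidableEq α] (w : List α) : Polynomial ℂ :=
  1 + (Polynomial.X - Polynomial.C (q : ℂ)) * APolyC w

/-- `h_w(n)`: the number of words of length `n` over `Fin q` whose last `w.length` letters
equal `w` and which contain no other occurrence of `w` as consecutive letters. -/
noncomputable def hitCount (q : ℕ) (w : List (Fin q)) (n : ℕ) : ℕ :=
  Nat.card {l : List (Fin q) // l.length = n ∧ l.drop (n - w.length) = w ∧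
    ∀ p < n - w.length, (l.drop p).take w.length ≠ w}

/-- The first hitting probability `P_h(w,n) = h_w(n+k)/q^(n+k)` where `k = w.length`. -/
noncomputable def hitProb (q : ℕ) (w : List (Fin q)) (n : ℕ) : ℝ :=
  (hitCount q w (n + w.length) : ℝ) / (q : ℝ) ^ (n + w.length)

/-- The constant `C_{w/w'} = ln(1+r)/r` with `r = (A_w(q) − A_{w'}(q))/A_{w'}(q)`. -/
noncomputable def Crat (q : ℕ) (w w' : List (Fin q)) : ℝ :=
  Real.log (1 + ((APolyR w).eval (q : ℝ) - (APolyR w').eval (q : ℝ)) / (APolyR w').eval (q : ℝ)) /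
    (((APolyR w).eval (q : ℝ) - (APolyR w').eval (q : ℝ)) / (APolyR w').eval (q : ℝ))

/-- The partial-fraction coefficient `c_w = 1/P_w'(α_m)`. -/
noncomputable def cwCoef (q : ℕ) (w : List (Fin q)) (αm : ℝ) : ℝ :=
  1 / ((PPolyR q w).derivative.eval αm)

/-- For `q ≥ 2`, `k ≥ 3` and a word `w` of length `k`, one has `P_w(q) = 1`
and `P_w(q − q^{-(k-2)}) ≤ 0`; consequently `P_w` has a real root in `[q − q^{-(k-2)}, q)`. -/
lemma APolyR_eval_ge {α : Type*} [DecidableEq α] (w : List α) (x : ℝ) (hx : 0 ≤ x)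
    (hw : w.length ≠ 0) : x ^ (w.length - 1) ≤ (APolyR w).eval x := by
  rw [APolyR, Polynomial.eval_finset_sum]
  have hmem : w.length - 1 ∈ Finset.range w.length := by simp; omega
  have hterm : ((Polynomial.C (acorrBit w (w.length - 1 + 1) : ℝ)) *
      Polynomial.X ^ (w.length - 1)).eval x = x ^ (w.length - 1) := by
    have h1 : w.length - 1 + 1 = w.length := by omega
    rw [h1]
    simp [acorrBit]
  have hnn : ∀ i ∈ Finset.range w.length,
      (0:ℝ) ≤ ((Polynomial.C (acorrBit w (i + 1) : ℝ)) * Polynomial.X ^ i).eval x := by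
    intro i _
    rw [Polynomial.eval_mul, Polynomial.eval_C, Polynomial.eval_pow, Polynomial.eval_X]
    positivity
  calc x ^ (w.length - 1) = _ := hterm.symm
    _ ≤ _ := Finset.single_le_sum hnn hmem

theorem stmt4 (q k : ℕ) (hq : 2 ≤ q) (hk : 3 ≤ k) (w : List (Fin q)) (hwlen : w.length = k) :
    (PPolyR q w).eval (q : ℝ) = 1 ∧
    (PPolyR q w).eval ((q : ℝ) - (q : ℝ) ^ (-((k : ℤ) - 2))) ≤ 0 ∧
    ∃ x ∈ Set.Ico ((q : ℝ) - (q : ℝ) ^ (-((k : ℤ) - 2))) (q : ℝ), (PPolyR q w).eval x = 0 := by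
  set Q : ℝ := (q : ℝ) with hQdef
  have hQ2 : (2 : ℝ) ≤ Q := by rw [hQdef]; exact_mod_cast hq
  have hQ0 : (0 : ℝ) < Q := by linarith
  obtain ⟨n, rfl⟩ : ∃ n, k = n + 2 := ⟨k - 2, by omega⟩
  have hn1 : 1 ≤ n := by omega
  -- rewrite the zpow
  have hzpow : Q ^ (-(((n + 2 : ℕ) : ℤ) - 2)) = (Q ^ n)⁻¹ := by
    have : (-(((n + 2 : ℕ) : ℤ) - 2)) = -(n : ℤ) := by push_cast; ring
    rw [this, zpow_neg, zpow_natCast]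
  set ε : ℝ := (Q ^ n)⁻¹ with hεdef
  have hQn1 : (1 : ℝ) ≤ Q ^ n := one_le_pow₀ (by linarith)
  have hε0 : 0 < ε := by positivity
  have hε1 : ε ≤ 1 := by rw [hεdef]; exact inv_le_one_of_one_le₀ hQn1
  have hx0 : (0:ℝ) ≤ Q - ε := by linarith
  -- eval at Q = 1
  have h1 : (PPolyR q w).eval Q = 1 := by
    simp [PPolyR, hQdef]
  -- key inequality : ε * (Q - ε)^(n+1) ≥ 1
  have hkey : 1 ≤ ε * (Q - ε) ^ (n + 1) := by
    set t : ℝ := (Q ^ (n + 1))⁻¹ with htdef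
    have ht0 : 0 < t := by positivity
    have ht1 : t ≤ 1 := inv_le_one_of_one_le₀ (one_le_pow₀ (by linarith))
    have hQt : Q * t = ε := by
      rw [htdef, hεdef, pow_succ]
      field_simp
    have hfac : Q - ε = Q * (1 - t) := by rw [← hQt]; ring
    have hbern : 1 - ((n : ℝ) + 1) * t ≤ (1 - t) ^ (n + 1) := by
      have := one_add_mul_le_pow (show (-2:ℝ) ≤ -t by linarith) (n + 1)
      rw [show (1:ℝ) + -t = 1 - t from by ring] at this
      push_cast at this
      linarith
    have h2n : ((n : ℝ) + 1) ≤ 2 ^ n := by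
      exact_mod_cast Nat.lt_two_pow_self (n := n)
    have h2Q : (2:ℝ) ^ n ≤ Q ^ n := pow_le_pow_left₀ (by norm_num) hQ2 n
    -- Q^(n+1) - (n+1) ≥ Q^n
    have hmain : Q ^ n + ((n:ℝ) + 1) ≤ Q ^ (n + 1) := by
      have hs : Q ^ (n+1) = Q ^ n * Q := pow_succ Q n
      nlinarith [pow_pos hQ0 n, mul_nonneg (pow_pos hQ0 n).le (by linarith : (0:ℝ) ≤ Q - 2)]
    have hpow : Q ^ (n+1) * (1 - t) ^ (n+1) ≥ Q ^ (n+1) * (1 - ((n:ℝ)+1) * t) :=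
      mul_le_mul_of_nonneg_left hbern (pow_pos hQ0 (n+1)).le
    have hQt2 : Q ^ (n+1) * t = 1 := by
      rw [htdef]; field_simp
    have hgoal : Q ^ n ≤ (Q - ε) ^ (n + 1) := by
      rw [hfac, mul_pow]
      calc Q ^ n ≤ Q ^ (n+1) - ((n:ℝ)+1) := by linarith
        _ = Q ^ (n+1) * (1 - ((n:ℝ)+1) * t) := by
            rw [mul_sub, mul_one]
            have : Q ^ (n+1) * (((n:ℝ)+1) * t) = ((n:ℝ)+1) * (Q^(n+1) * t) := by ring
            rw [this, hQt2]; ring_nf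
        _ ≤ Q ^ (n+1) * (1 - t) ^ (n+1) := hpow
    calc (1:ℝ) = ε * Q ^ n := by rw [hεdef]; field_simp
      _ ≤ ε * (Q - ε) ^ (n+1) := mul_le_mul_of_nonneg_left hgoal hε0.le
  -- eval at Q - ε ≤ 0
  have hA : (Q - ε) ^ (n + 1) ≤ (APolyR w).eval (Q - ε) := by
    have := APolyR_eval_ge w (Q - ε) hx0 (by omega)
    rwa [hwlen, show n + 2 - 1 = n + 1 from rfl] at this
  have h2 : (PPolyR q w).eval (Q - ε) ≤ 0 := by
    have hev : (PPolyR q w).eval (Q - ε) = 1 - ε * (APolyR w).eval (Q - ε) := by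
      simp [PPolyR]; ring
    rw [hev]
    nlinarith
  refine ⟨h1, by rwa [hzpow], ?_⟩
  rw [hzpow]
  -- IVT
  have hle : Q - ε ≤ Q := by linarith
  have hcont : ContinuousOn (fun x => (PPolyR q w).eval x) (Set.Icc (Q - ε) Q) :=
    (PPolyR q w).continuous.continuousOn
  have h0mem : (0:ℝ) ∈ Set.Icc ((PPolyR q w).eval (Q - ε)) ((PPolyR q w).eval Q) := by
    rw [h1]; exact ⟨h2, by norm_num⟩
  obtain ⟨x, hx, hfx⟩ := intermediate_value_Icc hle hcont h0mem
  refine ⟨x, ⟨hx.1, lt_of_le_of_ne hx.2 ?_⟩, hfx⟩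
  rintro rfl
  have hfx' : (PPolyR q w).eval Q = 0 := hfx
  rw [h1] at hfx'; norm_num at hfx'
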